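/- If φ : ℂ → ℂ is continuous on the closed unit disc, holomorphic on the open unit disc, and its boundary values on the unit circle lie in the set {w ∈ ℂ : |w| = 1 and Im w ≥ 0} (the closed upper half of the unit circle), then φ is constant. -/

import Mathlib

open Metric Complex

theorem constant_of_upper_half_circle_boundary_values
    (φ : ℂ → ℂ)
    (hc : ContinuousOn φ (closedBall 0 1))
    (hd : DifferentiableOn ℂ φ (ball 0 1))
    (hb : ∀ ζ ∈ sphere (0 : ℂ) 1, ‖φ ζ‖ = 1 ∧ 0 ≤ (φ ζ).im) :
    ∃ c : ℂ, ∀ z ∈ closedBall (0 : ℂ) 1, φ z = c := by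
  have hcl : closure (ball (0:ℂ) 1) = closedBall 0 1 := closure_ball 0 one_ne_zero
  have hfr : frontier (ball (0:ℂ) 1) = sphere 0 1 := frontier_ball 0 one_ne_zero
  have hφ : DiffContOnCl ℂ φ (ball 0 1) := ⟨hd, by rwa [hcl]⟩
  have hle : ∀ z ∈ closedBall (0:ℂ) 1, ‖φ z‖ ≤ 1 := by
    intro z hz
    refine norm_le_of_forall_mem_frontier_norm_le isBounded_ball hφ ?_ (by rwa [hcl])
    rw [hfr]; exact fun ζ hζ => (hb ζ hζ).1.le
  by_cases hmax : ∃ z₀ ∈ ball (0:ℂ) 1, ‖φ z₀‖ = 1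
  · obtain ⟨z₀, hz₀, h1⟩ := hmax
    have hmaxon : IsMaxOn (norm ∘ φ) (ball (0:ℂ) 1) z₀ := by
      intro x hx
      simp only [Function.comp_apply, Set.mem_setOf_eq, h1]
      exact hle x (ball_subset_closedBall hx)
    refine ⟨φ z₀, fun z hz => ?_⟩
    exact eqOn_closure_of_isPreconnected_of_isMaxOn_norm (convex_ball _ _).isPreconnected
      isOpen_ball hφ hz₀ hmaxon (by rwa [hcl])
  · push_neg at hmax
    have hlt : ∀ z ∈ ball (0:ℂ) 1, ‖φ z‖ < 1 := fun z hz =>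
      lt_of_le_of_ne (hle z (ball_subset_closedBall hz)) (hmax z hz)
    set g : ℂ → ℂ := fun z => (φ z - I) / (φ z + I) with hgdef
    have hden : ∀ z ∈ closedBall (0:ℂ) 1, φ z + I ≠ 0 := by
      intro z hz h0
      have hφz : φ z = -I := by linear_combination h0
      rcases eq_or_lt_of_le (mem_closedBall.mp hz) with h | h
      · have := (hb z (by simpa [mem_sphere] using h)).2
        rw [hφz] at this; norm_num at this
      · have := hlt z (mem_ball.mpr h)
        rw [hφz] at this; simp at this
    have hdenb : ∀ z ∈ ball (0:ℂ) 1, φ z + I ≠ 0 :=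
      fun z hz => hden z (ball_subset_closedBall hz)
    have hgd : DifferentiableOn ℂ g (ball 0 1) :=
      (hd.sub_const I).div (hd.add_const I) hdenb
    have hgc : ContinuousOn g (closedBall 0 1) :=
      (hc.sub continuousOn_const).div (hc.add continuousOn_const) hden
    have hre0 : ∀ ζ ∈ sphere (0:ℂ) 1, (g ζ).re = 0 := by
      intro ζ hζ
      have h1 : Complex.normSq (φ ζ) = 1 := by
        rw [← Complex.sq_norm, (hb ζ hζ).1]; norm_num
      rw [Complex.normSq_apply] at h1
      have hnum : (φ ζ - I).re * (φ ζ + I).re + (φ ζ - I).im * (φ ζ + I).im = 0 := by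
        simp only [Complex.sub_re, Complex.sub_im, Complex.add_re, Complex.add_im,
          Complex.I_re, Complex.I_im]
        ring_nf
        nlinarith [h1]
      simp only [hgdef, Complex.div_re, ← add_div]
      rw [hnum, zero_div]
    have hexp : ∀ (s : ℂ), s = 1 ∨ s = -1 → ∀ z ∈ closedBall (0:ℂ) 1, (s * g z).re ≤ 0 := by
      intro s hs z hz
      have hdc : DiffContOnCl ℂ (fun z => Complex.exp (s * g z)) (ball 0 1) :=
        ⟨((hgd.const_mul s).cexp), by rw [hcl]; exact ((hgc.const_smul s).cexp)⟩
      have hbd : ‖Complex.exp (s * g z)‖ ≤ 1 := by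
        refine norm_le_of_forall_mem_frontier_norm_le isBounded_ball hdc ?_ (by rwa [hcl])
        rw [hfr]
        intro ζ hζ
        rw [Complex.norm_exp]
        have : (s * g ζ).re = 0 := by
          rcases hs with rfl | rfl <;>
            simp [Complex.mul_re, hre0 ζ hζ, Complex.ext_iff]
        rw [this, Real.exp_zero]
      rw [Complex.norm_exp, Real.exp_le_one_iff] at hbd
      exact hbd
    have hgre : ∀ z ∈ closedBall (0:ℂ) 1, (g z).re = 0 := by
      intro z hz
      have h1 := hexp 1 (Or.inl rfl) z hz
      have h2 := hexp (-1) (Or.inr rfl) z hz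
      simp [Complex.mul_re] at h1 h2
      linarith
    have han : AnalyticOnNhd ℂ g (ball 0 1) := hgd.analyticOnNhd isOpen_ball
    rcases han.is_constant_or_isOpen (convex_ball _ _).isPreconnected with ⟨w, hw⟩ | hopen
    · have h0 : (0:ℂ) ∈ ball (0:ℂ) 1 := by simp
      have hconst : ∀ z ∈ ball (0:ℂ) 1, φ z = φ 0 := by
        intro z hz
        have he : g z = g 0 := by rw [hw z hz, hw 0 h0]
        have he2 : (φ z - I) * (φ 0 + I) = (φ 0 - I) * (φ z + I) :=
          (div_eq_div_iff (hdenb z hz) (hdenb 0 h0)).mp he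
        have h2I : (2 * I) * (φ z - φ 0) = 0 := by linear_combination he2
        rcases mul_eq_zero.mp h2I with h | h
        · exfalso; simp [Complex.ext_iff] at h
        · linear_combination h
      refine ⟨φ 0, fun z hz => ?_⟩
      have heq : Set.EqOn φ (fun _ => φ 0) (ball (0:ℂ) 1) := hconst
      exact heq.of_subset_closure hc continuousOn_const ball_subset_closedBall
        (by rw [hcl]) hz
    · exfalso
      have hopen' : IsOpen (g '' ball (0:ℂ) 1) :=
        hopen (ball 0 1) Set.Subset.rfl isOpen_ball
      have hmem : g 0 ∈ g '' ball (0:ℂ) 1 := ⟨0, by simp, rfl⟩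
      obtain ⟨ε, hε, hball⟩ := Metric.isOpen_iff.mp hopen' _ hmem
      have hmem2 : g 0 + (ε/2 : ℝ) ∈ g '' ball (0:ℂ) 1 := by
        apply hball
        have hd2 : dist (g 0 + ((ε/2:ℝ):ℂ)) (g 0) = ε/2 := by
          simp [Complex.dist_eq, Complex.norm_real, abs_of_pos (half_pos hε), abs_of_pos hε]
        rw [mem_ball, hd2]
        linarith
      obtain ⟨z, hz, hgz⟩ := hmem2
      have := hgre z (ball_subset_closedBall hz)
      rw [hgz] at this
      have h0re := hgre 0 (ball_subset_closedBall (by simp))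
      simp [Complex.add_re, h0re] at this
      linarith
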